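/- There is a power d of the imaginary unit i such that the sesquilinear form ⟨u,v⟩_Δ := d·(e_{i₁}·…·e_{i_p}·u, v) on Δ^ℂ_{p,q} — where (·,·) is the standard Hermitian inner product on ℂ^{2^⌊n/2⌋} and i₁ < … < i_p are the indices with ε_{i_j} = −1 — is Hermitian, has neutral signature when p > 0 and q > 0, and satisfies ⟨X·u, v⟩_Δ + (−1)^p ⟨u, X·v⟩_Δ = 0 for all X ∈ ℝⁿ and all u, v ∈ Δ^ℂ_{p,q}. -/

import Mathlib

open Complex Matrix

namespace Paper

noncomputable section

/-- The 2×2 generator matrices of Remark 2.1. -/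
def matE : Matrix (Fin 2) (Fin 2) ℂ := 1
def matT : Matrix (Fin 2) (Fin 2) ℂ := !![-1, 0; 0, 1]
def matG1 : Matrix (Fin 2) (Fin 2) ℂ := !![0, Complex.I; Complex.I, 0]
def matG2 : Matrix (Fin 2) (Fin 2) ℂ := !![0, -1; 1, 0]

/-- Iterated Kronecker product of 2×2 matrices, realised on the index type `Fin m → Fin 2`
(the slot `ν` corresponds to the `(ν+1)`-st label of the basis spinors `u(ε₁,…,ε_m)`,
i.e. the Kronecker factors are taken from right to left). -/
def tprod {m : ℕ} (M : Fin m → Matrix (Fin 2) (Fin 2) ℂ) :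
    Matrix (Fin m → Fin 2) (Fin m → Fin 2) ℂ :=
  Matrix.of fun a b => ∏ ν, M ν (a ν) (b ν)

/-- `τ_j = 1` if `ε_j = 1` and `τ_j = i` if `ε_j = -1`. -/
def tau {n : ℕ} (ε : Fin n → ℝ) (j : Fin n) : ℂ := if ε j = 1 then 1 else Complex.I

/-- The matrices `Φ_{p,q}(e_i)` of the explicit Clifford representation of Remark 2.1
(0-based index `i`; the paper's `e_{2j-1}` resp. `e_{2j}` correspond to `i = 2j-2` resp.
`i = 2j-1`, acting by `g₁` resp. `g₂` in slot `j-1`, by `T` in the lower slots and by `E`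
in the higher slots).  For odd `n` the last matrix is the first component
`pr₁ ∘ Φ̃ (e_n) = τ_n · (i T ⊗ ⋯ ⊗ T)`. -/
def Phi {n : ℕ} (ε : Fin n → ℝ) (i : Fin n) :
    Matrix (Fin (n / 2) → Fin 2) (Fin (n / 2) → Fin 2) ℂ :=
  tau ε i •
    if i.val < 2 * (n / 2) then
      tprod fun ν : Fin (n / 2) =>
        if ν.val < i.val / 2 then matT
        else if ν.val = i.val / 2 then (if i.val % 2 = 0 then matG1 else matG2)
        else matE
    else Complex.I • tprod fun _ : Fin (n / 2) => matT

/-- The spinor module `Δ_{p,q} = ℂ^{2^{⌊n/2⌋}}`. -/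
abbrev Spinor (n : ℕ) := (Fin (n / 2) → Fin 2) → ℂ

/-- Clifford multiplication by a real vector, as a matrix. -/
def cliffR {n : ℕ} (ε : Fin n → ℝ) (x : Fin n → ℝ) :
    Matrix (Fin (n / 2) → Fin 2) (Fin (n / 2) → Fin 2) ℂ :=
  ∑ i, (x i : ℂ) • Phi ε i

/-- Clifford multiplication by a complex vector (complex-bilinear extension). -/
def cliffC {n : ℕ} (ε : Fin n → ℝ) (x : Fin n → ℂ) :
    Matrix (Fin (n / 2) → Fin 2) (Fin (n / 2) → Fin 2) ℂ :=
  ∑ i, x i • Phi ε i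

/-- The scalar product `⟨x,y⟩_{p,q} = ∑ ε_i x_i y_i` on `ℝⁿ`. -/
def ipR {n : ℕ} (ε : Fin n → ℝ) (x y : Fin n → ℝ) : ℝ := ∑ i, ε i * x i * y i

/-- Its complex-bilinear extension to `ℂⁿ`. -/
def ipC {n : ℕ} (ε : Fin n → ℝ) (x y : Fin n → ℂ) : ℂ := ∑ i, (ε i : ℂ) * x i * y i

/-- The standard Hermitian scalar product on the spinor module. -/
def stdInner {n : ℕ} (u v : Spinor n) : ℂ := ∑ b, (starRingEnd ℂ) (u b) * v b

/-- Clifford multiplication by the product `e_{i₁} ⋯ e_{i_k}` over a set of indices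
`s = {i₁ < … < i_k}`, taken in increasing order. -/
def cliffSet {n : ℕ} (ε : Fin n → ℝ) (s : Finset (Fin n)) :
    Matrix (Fin (n / 2) → Fin 2) (Fin (n / 2) → Fin 2) ℂ :=
  ((s.sort (· ≤ ·)).map (Phi ε)).prod

/-- The set of indices with `ε_i = -1`. -/
def negSet {n : ℕ} (ε : Fin n → ℝ) : Finset (Fin n) := Finset.univ.filter fun i => ε i = -1

/-- The indefinite spinor inner product `⟨u,v⟩_Δ = d · (e_{i₁} ⋯ e_{i_p} · u, v)`,
where `i₁ < … < i_p` are the indices with `ε = -1`. -/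
def sform {n : ℕ} (ε : Fin n → ℝ) (d : ℂ) (u v : Spinor n) : ℂ :=
  d * stdInner ((cliffSet ε (negSet ε)).mulVec u) v

/-- The coefficient `d_{k,p} · ε_{i₁} ⋯ ε_{i_k} · ⟨e_{i₁} ⋯ e_{i_k} · χ, χ⟩_Δ` of the
algebraic Dirac form (`dD` is the constant of the spinor inner product, `dk` is `d_{k,p}`). -/
def dCoeff {n : ℕ} (ε : Fin n → ℝ) (dD dk : ℂ) (s : Finset (Fin n)) (χ : Spinor n) : ℂ :=
  dk * (∏ i ∈ s, (ε i : ℂ)) * sform ε dD ((cliffSet ε s).mulVec χ) χ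

/-- The covector `X^♭ = ⟨X,·⟩_{p,q}`. -/
def flat {n : ℕ} (ε : Fin n → ℝ) (X : Fin n → ℝ) : (Fin n → ℝ) →ₗ[ℝ] ℝ :=
  ∑ i, (ε i * X i) • LinearMap.proj i

/-- The wedge product of `k` one-forms, as an alternating `k`-form. -/
def wedge1 {n k : ℕ} (f : Fin k → ((Fin n → ℝ) →ₗ[ℝ] ℝ)) :
    AlternatingMap ℝ (Fin n → ℝ) ℝ (Fin k) :=
  (Matrix.detRowAlternating : AlternatingMap ℝ (Fin k → ℝ) ℝ (Fin k)).compLinearMap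
    (LinearMap.pi f)

/-- The algebraic Dirac `k`-form
`α^k_χ = d_{k,p} ∑_{i₁<⋯<i_k} ε_{i₁}⋯ε_{i_k} ⟨e_{i₁}⋯e_{i_k}·χ, χ⟩_Δ e^♭_{i₁} ∧ ⋯ ∧ e^♭_{i_k}`
(a real form; the coefficients are real by the choice of the constant `dk = d_{k,p}`). -/
def diracForm {n : ℕ} (ε : Fin n → ℝ) (dD dk : ℂ) (k : ℕ) (χ : Spinor n) :
    AlternatingMap ℝ (Fin n → ℝ) ℝ (Fin k) :=
  ∑ s : Finset (Fin n),
    if h : s.card = k then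
      (dCoeff ε dD dk s χ).re •
        wedge1 fun j => flat ε (Pi.single (s.orderEmbOfFin h j) 1)
    else 0

/-- The wedge product of `j` one-forms with a `(p-j)`-form, as an alternating `p`-form. -/
def wedgeMix {n p j : ℕ} (h : j ≤ p) (f : Fin j → ((Fin n → ℝ) →ₗ[ℝ] ℝ))
    (β : AlternatingMap ℝ (Fin n → ℝ) ℝ (Fin (p - j))) :
    AlternatingMap ℝ (Fin n → ℝ) ℝ (Fin p) :=
  AlternatingMap.domDomCongr (finSumFinEquiv.trans (finCongr (by omega)))
    ((TensorProduct.lid ℝ ℝ).toLinearMap.compAlternatingMap ((wedge1 f).domCoprod β))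

/-- The basis spinor `u(ε₁,…,ε_m)` (encoded by `a : Fin m → Fin 2`, where `a ν = 0`
corresponds to the label `ε_{ν+1} = 1` and `a ν = 1` to `ε_{ν+1} = -1`). -/
def uB (n : ℕ) (a : Fin (n / 2) → Fin 2) : Spinor n := fun b => if b = a then 1 else 0

end

end Paper
namespace Paper

-- ===== auxiliary lemmas =====
noncomputable section Aux
open Complex Matrix

lemma tprod_mul {m : ℕ} (M N : Fin m → Matrix (Fin 2) (Fin 2) ℂ) :
    tprod M * tprod N = tprod (fun ν => M ν * N ν) := by
  ext a b
  simp only [tprod, Matrix.mul_apply, Matrix.of_apply]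
  rw [Fintype.prod_sum (fun ν j => M ν (a ν) j * N ν j (b ν))]
  simp [Finset.prod_mul_distrib]

lemma tprod_smul {m : ℕ} (c : Fin m → ℂ) (M : Fin m → Matrix (Fin 2) (Fin 2) ℂ) :
    tprod (fun ν => c ν • M ν) = (∏ ν, c ν) • tprod M := by
  ext a b
  simp [tprod, Finset.prod_mul_distrib]

lemma tprod_one {m : ℕ} : tprod (fun _ : Fin m => (1 : Matrix (Fin 2) (Fin 2) ℂ)) = 1 := by
  ext a b
  simp only [tprod, Matrix.of_apply, Matrix.one_apply]
  by_cases h : a = b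
  · subst h; simp
  · rw [if_neg h]
    obtain ⟨ν, hν⟩ := Function.ne_iff.mp h
    exact Finset.prod_eq_zero (Finset.mem_univ ν) (by simp [hν])

lemma tprod_congr {m : ℕ} {M N : Fin m → Matrix (Fin 2) (Fin 2) ℂ} (h : ∀ ν, M ν = N ν) :
    tprod M = tprod N := by
  have : M = N := funext h
  rw [this]

lemma tprod_conjTranspose {m : ℕ} (M : Fin m → Matrix (Fin 2) (Fin 2) ℂ) :
    (tprod M)ᴴ = tprod (fun ν => (M ν)ᴴ) := by
  ext a b
  simp [tprod, Matrix.conjTranspose_apply, map_prod]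

lemma matT_mul_matT : matT * matT = 1 := by
  ext i j; fin_cases i <;> fin_cases j <;> simp [matT, Matrix.mul_apply, Fin.sum_univ_two, Matrix.one_apply]
lemma matG1_mul_matG1 : matG1 * matG1 = (-1 : ℂ) • 1 := by
  ext i j; fin_cases i <;> fin_cases j <;>
    simp [matG1, Matrix.mul_apply, Fin.sum_univ_two, Matrix.one_apply, Complex.I_mul_I]
lemma matG2_mul_matG2 : matG2 * matG2 = (-1 : ℂ) • 1 := by
  ext i j; fin_cases i <;> fin_cases j <;> simp [matG2, Matrix.mul_apply, Fin.sum_univ_two, Matrix.one_apply]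
lemma matG1_mul_matG2 : matG1 * matG2 = (-1 : ℂ) • (matG2 * matG1) := by
  ext i j; fin_cases i <;> fin_cases j <;> simp [matG1, matG2, Matrix.mul_apply, Fin.sum_univ_two]
lemma matG1_mul_matT : matG1 * matT = (-1 : ℂ) • (matT * matG1) := by
  ext i j; fin_cases i <;> fin_cases j <;> simp [matG1, matT, Matrix.mul_apply, Fin.sum_univ_two]
lemma matG2_mul_matT : matG2 * matT = (-1 : ℂ) • (matT * matG2) := by
  ext i j; fin_cases i <;> fin_cases j <;> simp [matG2, matT, Matrix.mul_apply, Fin.sum_univ_two]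
lemma matT_conjT : matTᴴ = matT := by
  ext i j; fin_cases i <;> fin_cases j <;> simp [matT]
lemma matG1_conjT : matG1ᴴ = (-1 : ℂ) • matG1 := by
  ext i j; fin_cases i <;> fin_cases j <;> simp [matG1]
lemma matG2_conjT : matG2ᴴ = (-1 : ℂ) • matG2 := by
  ext i j; fin_cases i <;> fin_cases j <;> simp [matG2]

/-- The Kronecker slot factor of `Phi ε i`. -/
def slotF {n : ℕ} (i : Fin n) (ν : Fin (n / 2)) : Matrix (Fin 2) (Fin 2) ℂ :=
  if i.val < 2 * (n / 2) then
    (if ν.val < i.val / 2 then matT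
     else if ν.val = i.val / 2 then (if i.val % 2 = 0 then matG1 else matG2)
     else matE)
  else matT

/-- The scalar factor of `Phi ε i`. -/
def cF {n : ℕ} (ε : Fin n → ℝ) (i : Fin n) : ℂ :=
  tau ε i * (if i.val < 2 * (n / 2) then 1 else Complex.I)

lemma Phi_eq {n : ℕ} (ε : Fin n → ℝ) (i : Fin n) :
    Phi ε i = cF ε i • tprod (slotF i) := by
  unfold Phi cF slotF
  by_cases h : i.val < 2 * (n / 2) <;> simp [h, smul_smul]

end Aux

noncomputable section Aux2
open Complex Matrix

lemma matG2_mul_matG1 : matG2 * matG1 = (-1 : ℂ) • (matG1 * matG2) := by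
  ext i j; fin_cases i <;> fin_cases j <;> simp [matG1, matG2, Matrix.mul_apply, Fin.sum_univ_two]

lemma slotF_swap {n : ℕ} (i j : Fin n) (s : Fin (n / 2))
    (h : ∀ ν, slotF i ν * slotF j ν = (if ν = s then (-1 : ℂ) else 1) • (slotF j ν * slotF i ν)) :
    ∀ ν, slotF j ν * slotF i ν = (if ν = s then (-1 : ℂ) else 1) • (slotF i ν * slotF j ν) := by
  intro ν
  rw [h ν, smul_smul]
  by_cases hν : ν = s <;> simp [hν]

lemma slotF_anticomm {n : ℕ} (i j : Fin n) (hij : i ≠ j) :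
    ∃ s : Fin (n / 2), ∀ ν, slotF i ν * slotF j ν =
      (if ν = s then (-1 : ℂ) else 1) • (slotF j ν * slotF i ν) := by
  have hvij : i.val ≠ j.val := fun h => hij (Fin.ext h)
  have hi' := i.isLt
  have hj' := j.isLt
  have hgT : ∀ m : ℕ, (if m % 2 = 0 then matG1 else matG2) * matT
      = (-1 : ℂ) • (matT * (if m % 2 = 0 then matG1 else matG2)) := by
    intro m; by_cases h : m % 2 = 0 <;> simp [h, matG1_mul_matT, matG2_mul_matT]
  have core : ∀ i j : Fin n, i.val ≠ j.val → i.val < 2 * (n / 2) →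
      (j.val < 2 * (n / 2) → i.val / 2 ≤ j.val / 2) →
      ∃ s : Fin (n / 2), ∀ ν, slotF i ν * slotF j ν =
        (if ν = s then (-1 : ℂ) else 1) • (slotF j ν * slotF i ν) := by
    intro i j hne hi hij2
    have hilt : i.val / 2 < n / 2 := by omega
    refine ⟨⟨i.val / 2, hilt⟩, fun ν => ?_⟩
    by_cases hj : j.val < 2 * (n / 2)
    · rcases lt_trichotomy ν.val (i.val / 2) with h | h | h
      · have h2 : ν.val < j.val / 2 := lt_of_lt_of_le h (hij2 hj)
        have hs : ¬ ν = (⟨i.val / 2, hilt⟩ : Fin (n / 2)) := by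
          intro he; have := congrArg Fin.val he; simp at this; omega
        rw [slotF, slotF, if_pos hi, if_pos hj, if_pos h, if_pos h2, if_neg hs, one_smul]
      · have hs : ν = (⟨i.val / 2, hilt⟩ : Fin (n / 2)) := by
          apply Fin.ext; exact h
        have hnlt : ¬ ν.val < i.val / 2 := by omega
        rcases eq_or_lt_of_le (hij2 hj) with he | hlt
        · have hnlt' : ¬ ν.val < j.val / 2 := by omega
          have h'' : ν.val = j.val / 2 := by omega
          rw [slotF, slotF, if_pos hi, if_pos hj, if_neg hnlt, if_neg hnlt', if_pos h,
            if_pos h'', if_pos hs]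
          have hmod : i.val % 2 ≠ j.val % 2 := by omega
          rcases Nat.mod_two_eq_zero_or_one i.val with hm | hm
          · rw [if_pos hm, if_neg (by omega : ¬ j.val % 2 = 0)]
            exact matG1_mul_matG2
          · rw [if_neg (by omega : ¬ i.val % 2 = 0), if_pos (by omega : j.val % 2 = 0)]
            exact matG2_mul_matG1
        · have h2 : ν.val < j.val / 2 := by omega
          rw [slotF, slotF, if_pos hi, if_pos hj, if_neg hnlt, if_pos h, if_pos h2, if_pos hs]
          exact hgT i.val
      · have h1 : slotF i ν = 1 := by
          rw [slotF, if_pos hi, if_neg (by omega), if_neg (by omega)]; rfl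
        have hs : ¬ ν = (⟨i.val / 2, hilt⟩ : Fin (n / 2)) := by
          intro he; have := congrArg Fin.val he; simp at this; omega
        rw [h1, one_mul, mul_one, if_neg hs, one_smul]
    · have h1 : slotF j ν = matT := by rw [slotF, if_neg hj]
      rcases lt_trichotomy ν.val (i.val / 2) with h | h | h
      · have hs : ¬ ν = (⟨i.val / 2, hilt⟩ : Fin (n / 2)) := by
          intro he; have := congrArg Fin.val he; simp at this; omega
        rw [h1, slotF, if_pos hi, if_pos h, if_neg hs, one_smul]
      · have hs : ν = (⟨i.val / 2, hilt⟩ : Fin (n / 2)) := Fin.ext h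
        rw [h1, slotF, if_pos hi, if_neg (by omega : ¬ ν.val < i.val / 2), if_pos h, if_pos hs]
        exact hgT i.val
      · have h2 : slotF i ν = 1 := by
          rw [slotF, if_pos hi, if_neg (by omega), if_neg (by omega)]; rfl
        have hs : ¬ ν = (⟨i.val / 2, hilt⟩ : Fin (n / 2)) := by
          intro he; have := congrArg Fin.val he; simp at this; omega
        rw [h1, h2, one_mul, mul_one, if_neg hs, one_smul]
  by_cases hi : i.val < 2 * (n / 2)
  · by_cases hj : j.val < 2 * (n / 2)
    · rcases le_total (i.val / 2) (j.val / 2) with hle | hle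
      · exact core i j hvij hi (fun _ => hle)
      · obtain ⟨s, hs⟩ := core j i (Ne.symm hvij) hj (fun _ => hle)
        exact ⟨s, slotF_swap j i s hs⟩
    · exact core i j hvij hi (fun h => absurd h hj)
  · by_cases hj : j.val < 2 * (n / 2)
    · obtain ⟨s, hs⟩ := core j i (Ne.symm hvij) hj (fun h => absurd h hi)
      exact ⟨s, slotF_swap j i s hs⟩
    · exact absurd (Fin.ext (by omega)) hij

lemma slotF_mul_self_lt {n : ℕ} (i : Fin n) (hi : i.val < 2 * (n / 2)) (hilt : i.val / 2 < n / 2) :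
    ∀ ν, slotF i ν * slotF i ν =
      (if ν = (⟨i.val / 2, hilt⟩ : Fin (n / 2)) then (-1 : ℂ) else 1) • 1 := by
  intro ν
  rcases lt_trichotomy ν.val (i.val / 2) with h | h | h
  · have hs : ¬ ν = (⟨i.val / 2, hilt⟩ : Fin (n / 2)) := by
      intro he; have := congrArg Fin.val he; simp at this; omega
    rw [slotF, if_pos hi, if_pos h, if_neg hs, one_smul, matT_mul_matT]
  · have hs : ν = (⟨i.val / 2, hilt⟩ : Fin (n / 2)) := Fin.ext h
    rw [slotF, if_pos hi, if_neg (by omega : ¬ ν.val < i.val / 2), if_pos h, if_pos hs]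
    by_cases hm : i.val % 2 = 0
    · rw [if_pos hm]; exact matG1_mul_matG1
    · rw [if_neg hm]; exact matG2_mul_matG2
  · have hs : ¬ ν = (⟨i.val / 2, hilt⟩ : Fin (n / 2)) := by
      intro he; have := congrArg Fin.val he; simp at this; omega
    have h2 : slotF i ν = 1 := by
      rw [slotF, if_pos hi, if_neg (by omega), if_neg (by omega)]; rfl
    rw [h2, if_neg hs, one_smul, one_mul]

lemma slotF_conjT_lt {n : ℕ} (i : Fin n) (hi : i.val < 2 * (n / 2)) (hilt : i.val / 2 < n / 2) :
    ∀ ν, (slotF i ν)ᴴ =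
      (if ν = (⟨i.val / 2, hilt⟩ : Fin (n / 2)) then (-1 : ℂ) else 1) • slotF i ν := by
  intro ν
  rcases lt_trichotomy ν.val (i.val / 2) with h | h | h
  · have hs : ¬ ν = (⟨i.val / 2, hilt⟩ : Fin (n / 2)) := by
      intro he; have := congrArg Fin.val he; simp at this; omega
    rw [slotF, if_pos hi, if_pos h, if_neg hs, one_smul, matT_conjT]
  · have hs : ν = (⟨i.val / 2, hilt⟩ : Fin (n / 2)) := Fin.ext h
    rw [slotF, if_pos hi, if_neg (by omega : ¬ ν.val < i.val / 2), if_pos h, if_pos hs]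
    by_cases hm : i.val % 2 = 0
    · rw [if_pos hm]; exact matG1_conjT
    · rw [if_neg hm]; exact matG2_conjT
  · have hs : ¬ ν = (⟨i.val / 2, hilt⟩ : Fin (n / 2)) := by
      intro he; have := congrArg Fin.val he; simp at this; omega
    have h2 : slotF i ν = 1 := by
      rw [slotF, if_pos hi, if_neg (by omega), if_neg (by omega)]; rfl
    rw [h2, if_neg hs, one_smul, Matrix.conjTranspose_one]

lemma prod_ite_neg {m : ℕ} (s : Fin m) :
    (∏ ν : Fin m, if ν = s then (-1 : ℂ) else 1) = -1 := by
  rw [Finset.prod_ite_eq' Finset.univ s (fun _ => (-1 : ℂ))]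
  simp

end Aux2

noncomputable section Aux3
open Complex Matrix

lemma Phi_anticomm {n : ℕ} (ε : Fin n → ℝ) {i j : Fin n} (hij : i ≠ j) :
    Phi ε i * Phi ε j = -(Phi ε j * Phi ε i) := by
  obtain ⟨s, hs⟩ := slotF_anticomm i j hij
  rw [Phi_eq, Phi_eq, Matrix.smul_mul, Matrix.mul_smul, smul_smul,
    Matrix.smul_mul, Matrix.mul_smul, smul_smul, tprod_mul, tprod_mul,
    tprod_congr hs]
  have : (fun ν => (if ν = s then (-1 : ℂ) else 1) • (slotF j ν * slotF i ν))
      = fun ν => (fun ν => if ν = s then (-1 : ℂ) else 1) ν • (fun ν => slotF j ν * slotF i ν) ν := rfl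
  rw [this, tprod_smul, prod_ite_neg]
  rw [smul_smul, ← neg_smul]
  ring_nf

lemma tau_sq {n : ℕ} (ε : Fin n → ℝ) (hε : ∀ i, ε i = 1 ∨ ε i = -1) (i : Fin n) :
    tau ε i * tau ε i = (ε i : ℂ) := by
  rcases hε i with h | h <;> simp [tau, h, Complex.I_mul_I]
  · norm_num

lemma Phi_sq {n : ℕ} (ε : Fin n → ℝ) (hε : ∀ i, ε i = 1 ∨ ε i = -1) (i : Fin n) :
    Phi ε i * Phi ε i = (-(ε i : ℂ)) • 1 := by
  rw [Phi_eq, Matrix.smul_mul, Matrix.mul_smul, smul_smul, tprod_mul]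
  by_cases hi : i.val < 2 * (n / 2)
  · have hilt : i.val / 2 < n / 2 := by omega
    rw [tprod_congr (slotF_mul_self_lt i hi hilt)]
    have : (fun ν => (if ν = (⟨i.val / 2, hilt⟩ : Fin (n / 2)) then (-1 : ℂ) else 1) • (1 : Matrix (Fin 2) (Fin 2) ℂ))
        = fun ν => (fun ν => if ν = (⟨i.val / 2, hilt⟩ : Fin (n / 2)) then (-1 : ℂ) else 1) ν •
            (fun _ : Fin (n / 2) => (1 : Matrix (Fin 2) (Fin 2) ℂ)) ν := rfl
    rw [this, tprod_smul, prod_ite_neg, tprod_one, smul_smul]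
    congr 1
    have : cF ε i = tau ε i := by rw [cF, if_pos hi, mul_one]
    rw [this, mul_neg_one, tau_sq ε hε i]
  · have h1 : ∀ ν : Fin (n / 2), slotF i ν * slotF i ν = (1 : Matrix (Fin 2) (Fin 2) ℂ) := by
      intro ν; rw [slotF, if_neg hi, matT_mul_matT]
    rw [tprod_congr h1, tprod_one]
    congr 1
    have : cF ε i = tau ε i * Complex.I := by rw [cF, if_neg hi]
    rw [this]
    have h2 := tau_sq ε hε i
    calc tau ε i * Complex.I * (tau ε i * Complex.I)
        = tau ε i * tau ε i * (Complex.I * Complex.I) := by ring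
      _ = -(ε i : ℂ) := by rw [h2, Complex.I_mul_I, mul_neg_one]

lemma Phi_conjT {n : ℕ} (ε : Fin n → ℝ) (hε : ∀ i, ε i = 1 ∨ ε i = -1) (i : Fin n) :
    (Phi ε i)ᴴ = (-(ε i : ℂ)) • Phi ε i := by
  rw [Phi_eq, Matrix.conjTranspose_smul, tprod_conjTranspose]
  by_cases hi : i.val < 2 * (n / 2)
  · have hilt : i.val / 2 < n / 2 := by omega
    rw [tprod_congr (slotF_conjT_lt i hi hilt)]
    have : (fun ν => (if ν = (⟨i.val / 2, hilt⟩ : Fin (n / 2)) then (-1 : ℂ) else 1) • slotF i ν)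
        = fun ν => (fun ν => if ν = (⟨i.val / 2, hilt⟩ : Fin (n / 2)) then (-1 : ℂ) else 1) ν • slotF i ν := rfl
    rw [this, tprod_smul, prod_ite_neg, smul_smul, smul_smul]
    congr 1
    have hc : cF ε i = tau ε i := by rw [cF, if_pos hi, mul_one]
    rw [hc]
    rcases hε i with h | h <;> simp [tau, h] <;> norm_num
  · have h1 : ∀ ν : Fin (n / 2), (slotF i ν)ᴴ = slotF i ν := by
      intro ν; rw [slotF, if_neg hi, matT_conjT]
    rw [tprod_congr h1, smul_smul]
    congr 1
    have hc : cF ε i = tau ε i * Complex.I := by rw [cF, if_neg hi]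
    rw [hc]
    rcases hε i with h | h <;> simp [tau, h] <;> norm_num [Complex.ext_iff]

end Aux3

noncomputable section Aux4
open Complex Matrix

variable {n : ℕ} (ε : Fin n → ℝ)

lemma prod_move (i : Fin n) : ∀ (l : List (Fin n)), i ∉ l →
    ((l.map (Phi ε)).prod) * Phi ε i
      = ((-1 : ℂ) ^ l.length) • (Phi ε i * (l.map (Phi ε)).prod)
  | [], _ => by simp
  | a :: t, h => by
    have hai : a ≠ i := fun he => h (he ▸ List.mem_cons_self)
    have hit : i ∉ t := fun hm => h (List.mem_cons_of_mem _ hm)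
    simp only [List.map_cons, List.prod_cons, List.length_cons]
    rw [mul_assoc, prod_move i t hit, Matrix.mul_smul, ← mul_assoc,
      Phi_anticomm ε hai, neg_mul, mul_assoc, smul_neg, ← neg_smul, pow_succ]
    congr 1
    ring

lemma prod_move_mem (i : Fin n) : ∀ (l : List (Fin n)), l.Nodup → i ∈ l →
    ((l.map (Phi ε)).prod) * Phi ε i
      = ((-1 : ℂ) ^ (l.length - 1)) • (Phi ε i * (l.map (Phi ε)).prod)
  | [], _, hm => absurd hm List.not_mem_nil
  | a :: t, hnd, hm => by
    simp only [List.map_cons, List.prod_cons, List.length_cons, Nat.add_sub_cancel]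
    rcases List.mem_cons.mp hm with he | hmt
    · subst he
      have hit : i ∉ t := (List.nodup_cons.mp hnd).1
      rw [mul_assoc, prod_move ε i t hit, Matrix.mul_smul, ← mul_assoc, mul_assoc]
    · have hndt : t.Nodup := (List.nodup_cons.mp hnd).2
      have htne : t ≠ [] := List.ne_nil_of_mem hmt
      have hlen : 1 ≤ t.length := List.length_pos_iff.mpr htne
      have hai : a ≠ i := fun he => (List.nodup_cons.mp hnd).1 (he ▸ hmt)
      rw [mul_assoc, prod_move_mem i t hndt hmt, Matrix.mul_smul, ← mul_assoc,
        Phi_anticomm ε hai, neg_mul, mul_assoc, smul_neg, ← neg_smul]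
      congr 1
      have h2 : (-1 : ℂ) ^ t.length = (-1) ^ (t.length - 1) * (-1) := by
        rw [← pow_succ]
        congr 1
        omega
      rw [h2]
      ring

lemma prod_sq : ∀ (l : List (Fin n)), l.Nodup →
    (∀ j ∈ l, Phi ε j * Phi ε j = 1) →
    ((l.map (Phi ε)).prod) * ((l.map (Phi ε)).prod)
      = ((-1 : ℂ) ^ (l.length.choose 2)) • 1
  | [], _, _ => by simp
  | a :: t, hnd, hsq => by
    have hndt : t.Nodup := (List.nodup_cons.mp hnd).2
    have hat : a ∉ t := (List.nodup_cons.mp hnd).1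
    simp only [List.map_cons, List.prod_cons, List.length_cons]
    calc Phi ε a * (t.map (Phi ε)).prod * (Phi ε a * (t.map (Phi ε)).prod)
        = Phi ε a * (((t.map (Phi ε)).prod * Phi ε a) * (t.map (Phi ε)).prod) := by
          simp only [mul_assoc]
      _ = Phi ε a * ((((-1 : ℂ) ^ t.length) • (Phi ε a * (t.map (Phi ε)).prod)) * (t.map (Phi ε)).prod) := by
          rw [prod_move ε a t hat]
      _ = ((-1 : ℂ) ^ t.length) • (Phi ε a * (Phi ε a * ((t.map (Phi ε)).prod * (t.map (Phi ε)).prod))) := by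
          rw [Matrix.smul_mul, Matrix.mul_smul]
          congr 1
          simp only [mul_assoc]
      _ = ((-1 : ℂ) ^ t.length) • (Phi ε a * (Phi ε a * (((-1 : ℂ) ^ (t.length.choose 2)) • 1))) := by
          rw [prod_sq t hndt (fun j hj => hsq j (List.mem_cons_of_mem _ hj))]
      _ = ((-1 : ℂ) ^ ((t.length + 1).choose 2)) • 1 := by
          rw [← mul_assoc, hsq a (List.mem_cons_self), one_mul, smul_smul,
            Nat.choose_succ_succ, Nat.choose_one_right, pow_add]

lemma prod_conjT : ∀ (l : List (Fin n)), l.Nodup →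
    (∀ j ∈ l, (Phi ε j)ᴴ = Phi ε j) →
    ((l.map (Phi ε)).prod)ᴴ = ((-1 : ℂ) ^ (l.length.choose 2)) • (l.map (Phi ε)).prod
  | [], _, _ => by simp
  | a :: t, hnd, hct => by
    have hndt : t.Nodup := (List.nodup_cons.mp hnd).2
    have hat : a ∉ t := (List.nodup_cons.mp hnd).1
    simp only [List.map_cons, List.prod_cons]
    rw [Matrix.conjTranspose_mul, hct a (List.mem_cons_self),
      prod_conjT t hndt (fun j hj => hct j (List.mem_cons_of_mem _ hj)),
      Matrix.smul_mul, prod_move ε a t hat, smul_smul, List.length_cons,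
      Nat.choose_succ_succ, Nat.choose_one_right, pow_add]
    congr 1
    ring

end Aux4

noncomputable section Aux5
open Complex Matrix

lemma stdInner_mulVec_left {n : ℕ} (C : Matrix (Fin (n / 2) → Fin 2) (Fin (n / 2) → Fin 2) ℂ)
    (u v : Spinor n) : stdInner (C.mulVec u) v = stdInner u (Cᴴ.mulVec v) := by
  simp only [stdInner, Matrix.mulVec, dotProduct, map_sum, _root_.map_mul,
    Finset.sum_mul, Finset.mul_sum, Matrix.conjTranspose_apply, starRingEnd_apply]
  rw [Finset.sum_comm]
  refine Finset.sum_congr rfl fun c _ => Finset.sum_congr rfl fun b _ => ?_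
  ring

lemma stdInner_conj {n : ℕ} (u v : Spinor n) :
    (starRingEnd ℂ) (stdInner u v) = stdInner v u := by
  simp only [stdInner, map_sum, _root_.map_mul, Complex.conj_conj]
  exact Finset.sum_congr rfl fun b _ => mul_comm _ _

lemma stdInner_add_right {n : ℕ} (u v w : Spinor n) :
    stdInner u (v + w) = stdInner u v + stdInner u w := by
  simp [stdInner, mul_add, Finset.sum_add_distrib]

lemma stdInner_smul_right {n : ℕ} (c : ℂ) (u v : Spinor n) :
    stdInner u (c • v) = c * stdInner u v := by
  simp only [stdInner, Pi.smul_apply, smul_eq_mul, Finset.mul_sum]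
  exact Finset.sum_congr rfl fun b _ => by ring

lemma stdInner_zero_right {n : ℕ} (u : Spinor n) : stdInner u (0 : Spinor n) = 0 := by
  simp [stdInner]

lemma stdInner_neg_right {n : ℕ} (u v : Spinor n) : stdInner u (-v) = -stdInner u v := by
  simp [stdInner, mul_neg, Finset.sum_neg_distrib]

end Aux5

theorem exists_invariant_hermitian_inner_product
    (n p : ℕ) (ε : Fin n → ℝ) (hε : ∀ i, ε i = 1 ∨ ε i = -1)
    (hp : (negSet ε).card = p)
    (hp0 : 0 < p) (hq0 : p < n) :
    ∃ k : ℕ,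
      -- with `d = i^k`, the form `⟨u,v⟩_Δ = d (e_{i₁}⋯e_{i_p}·u, v)` is Hermitian,
      (∀ u v : Spinor n,
        sform ε (Complex.I ^ k) v u = (starRingEnd ℂ) (sform ε (Complex.I ^ k) u v)) ∧
      -- it has neutral signature (`p > 0`, `q > 0`),
      (∃ V W : Submodule ℂ (Spinor n),
        IsCompl V W ∧
        Module.finrank ℂ V = 2 ^ (n / 2 - 1) ∧
        Module.finrank ℂ W = 2 ^ (n / 2 - 1) ∧
        (∀ v ∈ V, v ≠ 0 → 0 < (sform ε (Complex.I ^ k) v v).re) ∧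
        (∀ w ∈ W, w ≠ 0 → (sform ε (Complex.I ^ k) w w).re < 0)) ∧
      -- and it satisfies `⟨X·u, v⟩ + (-1)^p ⟨u, X·v⟩ = 0`.
      (∀ (X : Fin n → ℝ) (u v : Spinor n),
        sform ε (Complex.I ^ k) ((cliffR ε X).mulVec u) v
          + (-1 : ℂ) ^ p * sform ε (Complex.I ^ k) u ((cliffR ε X).mulVec v) = 0) := by
  classical
  have hl' : Finset.sort (negSet ε) (· ≤ ·) = Finset.sort (negSet ε) (· ≤ ·) := rfl
  set l : List (Fin n) := Finset.sort (negSet ε) (· ≤ ·) with hl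
  have hnd : l.Nodup := Finset.sort_nodup _ _
  have hlen : l.length = p := by rw [hl, Finset.length_sort]; exact hp
  have hmem : ∀ j : Fin n, j ∈ l ↔ ε j = -1 := by
    intro j
    rw [hl, Finset.mem_sort, negSet, Finset.mem_filter]
    simp
  set M : Matrix (Fin (n / 2) → Fin 2) (Fin (n / 2) → Fin 2) ℂ := cliffSet ε (negSet ε) with hM
  have hMl : M = (l.map (Phi ε)).prod := rfl
  set k := p.choose 2 with hk
  set d : ℂ := Complex.I ^ k with hd
  set s : ℂ := (-1 : ℂ) ^ k with hs
  have hss : s * s = 1 := by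
    rw [hs, ← pow_add, ← two_mul, pow_mul]
    norm_num
  have hconjd : (starRingEnd ℂ) d = s * d := by
    rw [hd, hs, map_pow, Complex.conj_I, ← mul_pow]
    congr 1
    ring
  have hconjs : (starRingEnd ℂ) s = s := by
    rw [hs]
    simp
  have hds : d * d * s = 1 := by
    rw [hd, hs, ← mul_pow, ← mul_pow, Complex.I_mul_I]
    norm_num
  have hPhisq1 : ∀ j ∈ l, Phi ε j * Phi ε j = 1 := by
    intro j hj
    rw [Phi_sq ε hε j, (hmem j).mp hj]
    norm_num
  have hPhiH : ∀ j ∈ l, (Phi ε j)ᴴ = Phi ε j := by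
    intro j hj
    rw [Phi_conjT ε hε j, (hmem j).mp hj]
    norm_num
  have hMH : Mᴴ = s • M := by rw [hMl, prod_conjT ε l hnd hPhiH, hlen, ← hMl]
  have hMM : M * M = s • 1 := by rw [hMl, prod_sq ε l hnd hPhisq1, hlen]
  set B : Matrix (Fin (n / 2) → Fin 2) (Fin (n / 2) → Fin 2) ℂ := (d * s) • M with hB
  have hBH : Bᴴ = B := by
    rw [hB, Matrix.conjTranspose_smul, hMH, smul_smul]
    have hst : star (d * s) * s = d * s := by
      rw [star_mul', ← starRingEnd_apply, ← starRingEnd_apply, hconjd, hconjs]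
      linear_combination (s * d) * hss
    rw [hst]
  have hBB : B * B = 1 := by
    rw [hB, Matrix.smul_mul, Matrix.mul_smul, hMM, smul_smul, smul_smul]
    have h1 : d * s * (d * s) * s = 1 := by linear_combination (s * s) * hds + hss
    rw [h1, one_smul]
  have hsform : ∀ u v : Spinor n, sform ε d u v = stdInner u (B.mulVec v) := by
    intro u v
    rw [sform, ← hM, stdInner_mulVec_left, hMH, Matrix.smul_mulVec,
      stdInner_smul_right, hB, Matrix.smul_mulVec, stdInner_smul_right]
    ring
  have hMPhi_neg : ∀ i : Fin n, ε i = -1 →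
      M * Phi ε i = ((-1 : ℂ) ^ (p - 1)) • (Phi ε i * M) := by
    intro i hi
    rw [hMl, prod_move_mem ε i l hnd ((hmem i).mpr hi), hlen]
  have hMPhi_pos : ∀ i : Fin n, ε i = 1 →
      M * Phi ε i = ((-1 : ℂ) ^ p) • (Phi ε i * M) := by
    intro i hi
    have hnm : i ∉ l := by
      intro h
      rw [hmem i, hi] at h
      norm_num at h
    rw [hMl, prod_move ε i l hnm, hlen]
  have h2p : ((-1 : ℂ)) ^ p * (-1) ^ p = 1 := by
    rw [← pow_add]
    exact Even.neg_one_pow ⟨p, by omega⟩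
  have hodd : ((-1 : ℂ)) ^ p * (-1) ^ (p - 1) = -1 := by
    rw [← pow_add]
    exact Odd.neg_one_pow ⟨p - 1, by omega⟩
  have hkey : ∀ i : Fin n, (Phi ε i)ᴴ * B + ((-1 : ℂ) ^ p) • (B * Phi ε i) = 0 := by
    intro i
    rcases hε i with hi | hi
    · rw [Phi_conjT ε hε i, hi, hB, Matrix.smul_mul, Matrix.smul_mul, Matrix.mul_smul,
        hMPhi_pos i hi]
      simp only [smul_smul]
      rw [← add_smul]
      convert zero_smul ℂ (Phi ε i * M) using 2
      push_cast
      linear_combination (d * s) * h2p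
    · rw [Phi_conjT ε hε i, hi, hB, Matrix.smul_mul, Matrix.smul_mul, Matrix.mul_smul,
        hMPhi_neg i hi]
      simp only [smul_smul]
      rw [← add_smul]
      convert zero_smul ℂ (Phi ε i * M) using 2
      push_cast
      linear_combination (d * s) * hodd
  clear_value B
  refine ⟨k, ?_, ?_, ?_⟩
  · -- Hermitian
    intro u v
    rw [← hd, hsform, hsform, stdInner_conj u (B.mulVec v), stdInner_mulVec_left, hBH]
  · -- neutral signature
    have hfd : FiniteDimensional ℂ (Spinor n) := by
      unfold Spinor
      infer_instance
    set f : Spinor n →ₗ[ℂ] Spinor n := Matrix.mulVecLin B with hf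
    set V : Submodule ℂ (Spinor n) := LinearMap.ker (f - LinearMap.id) with hV
    set W : Submodule ℂ (Spinor n) := LinearMap.ker (f + LinearMap.id) with hW
    have hmemV : ∀ x : Spinor n, x ∈ V ↔ B.mulVec x = x := by
      intro x
      rw [hV, LinearMap.mem_ker, LinearMap.sub_apply, LinearMap.id_apply, sub_eq_zero, hf,
        Matrix.mulVecLin_apply]
    have hmemW : ∀ x : Spinor n, x ∈ W ↔ B.mulVec x = -x := by
      intro x
      rw [hW, LinearMap.mem_ker, LinearMap.add_apply, LinearMap.id_apply,
        add_eq_zero_iff_eq_neg, hf, Matrix.mulVecLin_apply]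
    have hBB1 : ∀ x : Spinor n, B.mulVec (B.mulVec x) = x := by
      intro x
      rw [Matrix.mulVec_mulVec, hBB, Matrix.one_mulVec]
    have hcompl : IsCompl V W := by
      constructor
      · rw [disjoint_iff_inf_le]
        intro x hx
        obtain ⟨hx1, hx2⟩ := Submodule.mem_inf.mp hx
        have h4 : x = -x := ((hmemV x).mp hx1).symm.trans ((hmemW x).mp hx2)
        have h5 : (2 : ℂ) • x = 0 := by
          rw [two_smul]
          exact neg_eq_iff_add_eq_zero.mp h4.symm
        rcases smul_eq_zero.mp h5 with h | h
        · norm_num at h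
        · simpa using h
      · rw [codisjoint_iff_le_sup]
        intro x _
        have hx1 : (2⁻¹ : ℂ) • (x + B.mulVec x) ∈ V := by
          rw [hmemV, Matrix.mulVec_smul, Matrix.mulVec_add, hBB1, add_comm]
        have hx2 : (2⁻¹ : ℂ) • (x - B.mulVec x) ∈ W := by
          rw [hmemW, Matrix.mulVec_smul, Matrix.mulVec_sub, hBB1, ← smul_neg, neg_sub]
        refine Submodule.mem_sup.mpr ⟨_, hx1, _, hx2, ?_⟩
        rw [← smul_add]
        have h6 : (x + B.mulVec x) + (x - B.mulVec x) = (2 : ℂ) • x := by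
          rw [two_smul]
          abel
        rw [h6, smul_smul]
        norm_num
    have htot : Module.finrank ℂ (Spinor n) = 2 ^ (n / 2) := by
      rw [Module.finrank_fintype_fun_eq_card]
      simp [Fintype.card_fun]
    have hex : ∃ i0 : Fin n, M * Phi ε i0 = -(Phi ε i0 * M) := by
      rcases Nat.even_or_odd p with he | ho
      · have hne : (negSet ε).Nonempty := Finset.card_pos.mp (by rw [hp]; exact hp0)
        obtain ⟨i0, hi0⟩ := hne
        have hev : ε i0 = -1 := (Finset.mem_filter.mp hi0).2
        refine ⟨i0, ?_⟩
        rw [hMPhi_neg i0 hev]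
        have h7 : ((-1 : ℂ)) ^ (p - 1) = -1 := Odd.neg_one_pow (by
          rcases he with ⟨m, hm⟩
          exact ⟨m - 1, by omega⟩)
        rw [h7, neg_smul, one_smul]
      · have hne : ∃ i0 : Fin n, i0 ∉ negSet ε := by
          by_contra hc
          push_neg at hc
          have h8 : negSet ε = Finset.univ := Finset.eq_univ_iff_forall.mpr hc
          rw [h8, Finset.card_univ, Fintype.card_fin] at hp
          omega
        obtain ⟨i0, hi0⟩ := hne
        have hev : ε i0 = 1 := by
          rcases hε i0 with h | h
          · exact h
          · exact absurd (Finset.mem_filter.mpr ⟨Finset.mem_univ i0, h⟩) hi0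
        refine ⟨i0, ?_⟩
        rw [hMPhi_pos i0 hev, Odd.neg_one_pow ho, neg_smul, one_smul]
    obtain ⟨i0, hMU⟩ := hex
    set U : Matrix (Fin (n / 2) → Fin 2) (Fin (n / 2) → Fin 2) ℂ := Phi ε i0 with hU
    have hBU : B * U = -(U * B) := by
      rw [hB, Matrix.smul_mul, hU, hMU, Matrix.mul_smul, smul_neg]
    have hUinj : ∀ x : Spinor n, U.mulVec x = 0 → x = 0 := by
      intro x hx
      have h1 : (U * U).mulVec x = 0 := by
        rw [← Matrix.mulVec_mulVec, hx, Matrix.mulVec_zero]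
      rw [hU, Phi_sq ε hε i0, Matrix.smul_mulVec, Matrix.one_mulVec] at h1
      have hne : -((ε i0 : ℝ) : ℂ) ≠ 0 := by
        rcases hε i0 with h | h <;> rw [h] <;> norm_num
      rcases smul_eq_zero.mp h1 with h | h
      · exact absurd h hne
      · exact h
    have hUV : ∀ x ∈ V, U.mulVec x ∈ W := by
      intro x hx
      rw [hmemW, Matrix.mulVec_mulVec, hBU, Matrix.neg_mulVec, ← Matrix.mulVec_mulVec,
        (hmemV x).mp hx]
    have hUW : ∀ x ∈ W, U.mulVec x ∈ V := by
      intro x hx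
      rw [hmemV, Matrix.mulVec_mulVec, hBU, Matrix.neg_mulVec, ← Matrix.mulVec_mulVec,
        (hmemW x).mp hx, Matrix.mulVec_neg, neg_neg]
    have hrle : ∀ (P Q : Submodule ℂ (Spinor n)), (∀ x ∈ P, U.mulVec x ∈ Q) →
        Module.finrank ℂ P ≤ Module.finrank ℂ Q := by
      intro P Q hPQ
      have hg : Function.Injective ((Matrix.mulVecLin U).restrict (p := P) (q := Q)
          (fun x hx => by simpa [Matrix.mulVecLin_apply] using hPQ x hx)) := by
        intro a b hab
        apply Subtype.ext
        have h9 := congrArg Subtype.val hab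
        simp only [LinearMap.restrict_apply, Matrix.mulVecLin_apply] at h9
        have h10 : U.mulVec ((a : Spinor n) - b) = 0 := by
          rw [Matrix.mulVec_sub, h9, sub_self]
        exact sub_eq_zero.mp (hUinj _ h10)
      exact LinearMap.finrank_le_finrank_of_injective hg
    have hrVW : Module.finrank ℂ V = Module.finrank ℂ W :=
      le_antisymm (hrle V W hUV) (hrle W V hUW)
    have hsum : Module.finrank ℂ V + Module.finrank ℂ W = 2 ^ (n / 2) := by
      rw [← htot]
      exact Submodule.finrank_add_eq_of_isCompl hcompl
    have hpow : 2 ^ (n / 2) = 2 ^ (n / 2 - 1) * 2 := by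
      rw [← pow_succ]
      congr 1
      omega
    have hrV : Module.finrank ℂ V = 2 ^ (n / 2 - 1) := by omega
    have hrW : Module.finrank ℂ W = 2 ^ (n / 2 - 1) := by omega
    have hstd : ∀ x : Spinor n, x ≠ 0 → 0 < (stdInner x x).re := by
      intro x hx0
      have hre : (stdInner x x).re = ∑ b, Complex.normSq (x b) := by
        rw [stdInner, Complex.re_sum]
        refine Finset.sum_congr rfl fun b _ => ?_
        rw [← Complex.normSq_eq_conj_mul_self, Complex.ofReal_re]
      rw [hre]
      obtain ⟨b, hb⟩ := Function.ne_iff.mp hx0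
      exact Finset.sum_pos' (fun c _ => Complex.normSq_nonneg _)
        ⟨b, Finset.mem_univ b, Complex.normSq_pos.mpr hb⟩
    refine ⟨V, W, hcompl, hrV, hrW, ?_, ?_⟩
    · intro v hv hv0
      rw [← hd, hsform, (hmemV v).mp hv]
      exact hstd v hv0
    · intro w hw hw0
      rw [← hd, hsform, (hmemW w).mp hw, stdInner_neg_right, Complex.neg_re, neg_lt_zero]
      exact hstd w hw0
  · -- invariance
    intro X u v
    rw [← hd, hsform, hsform, stdInner_mulVec_left, Matrix.mulVec_mulVec,
      Matrix.mulVec_mulVec, ← stdInner_smul_right, ← stdInner_add_right]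
    have hXB : ((cliffR ε X)ᴴ * B) *ᵥ v + ((-1 : ℂ) ^ p) • ((B * cliffR ε X) *ᵥ v) = 0 := by
      rw [← Matrix.smul_mulVec, ← Matrix.add_mulVec]
      have hz : (cliffR ε X)ᴴ * B + ((-1 : ℂ) ^ p) • (B * cliffR ε X) = 0 := by
        rw [cliffR, Matrix.conjTranspose_sum, Finset.sum_mul, Finset.mul_sum,
          Finset.smul_sum, ← Finset.sum_add_distrib]
        refine Finset.sum_eq_zero fun i _ => ?_
        have h1 : ((X i : ℂ) • Phi ε i)ᴴ = (X i : ℂ) • (Phi ε i)ᴴ := by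
          rw [Matrix.conjTranspose_smul, Complex.star_def, Complex.conj_ofReal]
        rw [h1, Matrix.smul_mul, Matrix.mul_smul,
          smul_comm ((-1 : ℂ) ^ p) ((X i : ℂ)), ← smul_add, hkey i, smul_zero]
      rw [hz, Matrix.zero_mulVec]
    rw [hXB, stdInner_zero_right]


end Paper
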